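/- Ranking supermartingale convergence (Proposition 1): Let (Ω, ℱ, ℙ) be a probability space with a filtration (ℱ_i)_{i∈ℕ}, let T be a stopping time with respect to (ℱ_i), and let (X_i)_{i∈ℕ} be a sequence of integrable real-valued random variables such that each X_i is ℱ_i-measurable and X_i ≥ 0 almost surely. Suppose there exists ε > 0 such that for every i ∈ ℕ, 𝔼[X_{i+1} ∣ ℱ_i] ≤ X_i − ε·𝟙{T > i} almost surely. Then ℙ[T < ∞] = 1. -/

import Mathlib

open MeasureTheory Filter

/-- Ranking supermartingale convergence: if `(X i)` is a sequence of nonnegative integrable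
adapted random variables and `T` is a stopping time such that
`𝔼[X (i+1) ∣ ℱ i] ≤ X i - ε · 𝟙{T > i}` almost surely for every `i`, with `ε > 0`,
then `T` is almost surely finite, i.e. `ℙ[T < ∞] = 1`. -/
theorem ranking_supermartingale_convergence
    {Ω : Type*} {m0 : MeasurableSpace Ω} (μ : Measure Ω) [IsProbabilityMeasure μ]
    (ℱ : Filtration ℕ m0) (X : ℕ → Ω → ℝ) (T : Ω → ℕ∞)
    (hTstop : ∀ i : ℕ, MeasurableSet[ℱ i] {ω | T ω ≤ (i : ℕ∞)})
    (hadapted : ∀ i, StronglyMeasurable[ℱ i] (X i))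
    (hint : ∀ i, Integrable (X i) μ)
    (hnonneg : ∀ i, 0 ≤ᵐ[μ] X i)
    (ε : ℝ) (hε : 0 < ε)
    (hdec : ∀ i : ℕ, μ[X (i + 1)|ℱ i]
      ≤ᵐ[μ] fun ω => X i ω - ε * Set.indicator {ω' | (i : ℕ∞) < T ω'} (fun _ => (1 : ℝ)) ω) :
    μ {ω | T ω < ⊤} = 1 := by
  have hmeas : ∀ i : ℕ, MeasurableSet {ω | (i : ℕ∞) < T ω} := by
    intro i
    have h := ℱ.le i _ (hTstop i).compl
    convert h using 1
    ext ω; simp [not_le]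
  set q := (μ {ω | T ω = ⊤}).toReal with hq
  have hsub : ∀ i : ℕ, {ω | T ω = ⊤} ⊆ {ω | (i : ℕ∞) < T ω} := by
    intro i ω hω
    simp only [Set.mem_setOf_eq] at *
    rw [hω]
    exact lt_of_le_of_ne le_top (by simp)
  have hmono : ∀ i : ℕ, q ≤ (μ {ω | (i : ℕ∞) < T ω}).toReal := fun i =>
    ENNReal.toReal_mono (measure_ne_top μ _) (measure_mono (hsub i))
  have hstep : ∀ i : ℕ, ∫ ω, X (i + 1) ω ∂μ
      ≤ ∫ ω, X i ω ∂μ - ε * (μ {ω | (i : ℕ∞) < T ω}).toReal := by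
    intro i
    have hind : Integrable (Set.indicator {ω' | (i : ℕ∞) < T ω'} (fun _ => (1 : ℝ))) μ :=
      (integrable_const 1).indicator (hmeas i)
    have h1 : ∫ ω, X (i + 1) ω ∂μ = ∫ ω, (μ[X (i + 1)|ℱ i]) ω ∂μ :=
      (integral_condExp (ℱ.le i)).symm
    rw [h1]
    calc ∫ ω, (μ[X (i + 1)|ℱ i]) ω ∂μ
        ≤ ∫ ω, (X i ω - ε * Set.indicator {ω' | (i : ℕ∞) < T ω'} (fun _ => (1 : ℝ)) ω) ∂μ :=
          integral_mono_ae integrable_condExp ((hint i).sub (hind.const_mul ε)) (hdec i)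
      _ = ∫ ω, X i ω ∂μ - ε * (μ {ω | (i : ℕ∞) < T ω}).toReal := by
          rw [integral_sub (hint i) (hind.const_mul ε), integral_const_mul,
            integral_indicator_const (1 : ℝ) (hmeas i)]
          simp [Measure.real]
  have hmain : ∀ n : ℕ, ∫ ω, X n ω ∂μ + n * (ε * q) ≤ ∫ ω, X 0 ω ∂μ := by
    intro n
    induction n with
    | zero => simp
    | succ n ih =>
      have h1 := hstep n
      have h2 := hmono n
      have : ε * q ≤ ε * (μ {ω | (n : ℕ∞) < T ω}).toReal :=
        mul_le_mul_of_nonneg_left h2 hε.le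
      push_cast
      nlinarith
  have hq0 : q = 0 := by
    by_contra hne
    have hqpos : 0 < q := lt_of_le_of_ne ENNReal.toReal_nonneg (Ne.symm hne)
    obtain ⟨n, hn⟩ := exists_nat_gt ((∫ ω, X 0 ω ∂μ) / (ε * q))
    have hεq : 0 < ε * q := mul_pos hε hqpos
    have h1 : (∫ ω, X 0 ω ∂μ) < n * (ε * q) := by
      rw [div_lt_iff₀ hεq] at hn
      linarith
    have h2 := hmain n
    have h3 : 0 ≤ ∫ ω, X n ω ∂μ := integral_nonneg_of_ae (hnonneg n)
    linarith
  have hmeasT : MeasurableSet {ω | T ω = ⊤} := by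
    have : {ω | T ω = ⊤} = ⋂ i : ℕ, {ω | (i : ℕ∞) < T ω} := by
      ext ω
      simp only [Set.mem_setOf_eq, Set.mem_iInter]
      constructor
      · intro h i; rw [h]; exact lt_of_le_of_ne le_top (by simp)
      · intro h
        by_contra hne
        obtain ⟨n, hn⟩ := WithTop.ne_top_iff_exists.mp hne
        have := h n
        rw [← hn] at this
        exact lt_irrefl _ this
    rw [this]
    exact MeasurableSet.iInter fun i => hmeas i
  have hμT : μ {ω | T ω = ⊤} = 0 := by
    have := (ENNReal.toReal_eq_zero_iff _).mp hq0
    rcases this with h | h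
    · exact h
    · exact absurd h (measure_ne_top μ _)
  have hcompl : {ω | T ω < ⊤} = {ω | T ω = ⊤}ᶜ := by
    ext ω; simp [lt_top_iff_ne_top]
  rw [hcompl, measure_compl hmeasT (measure_ne_top μ _), hμT, measure_univ]
  simp
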